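/- The function ν(x) = 1/V_0(x) is strictly convex on [0, ∞): ν''(x) > 0 for all x > 0. -/

import Mathlib

open Real MeasureTheory Set Filter

noncomputable def V0 (x : ℝ) : ℝ := 2 * Real.exp (x^2) * ∫ t in Set.Ioi x, Real.exp (-t^2)

noncomputable def nu (x : ℝ) : ℝ := 1 / V0 x

noncomputable def Gf (x : ℝ) : ℝ := ∫ t in Set.Ioi x, Real.exp (-t^2)

lemma intg : Integrable (fun t : ℝ => Real.exp (-t^2)) := by
  have := integrable_exp_neg_mul_sq (one_pos (α := ℝ))
  simpa using this

lemma cont_integrand : Continuous (fun t : ℝ => Real.exp (-t^2)) := by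
  continuity

lemma Gf_pos (x : ℝ) : 0 < Gf x := by
  rw [Gf, setIntegral_pos_iff_support_of_nonneg_ae]
  · have : Function.support (fun t : ℝ => Real.exp (-t^2)) = Set.univ := by
      ext t; simp [Function.support, (Real.exp_pos _).ne']
    rw [this, Set.univ_inter]
    simp [Real.volume_Ioi]
  · exact Filter.Eventually.of_forall (fun t => (Real.exp_pos _).le)
  · exact intg.integrableOn

lemma Gf_split (a b : ℝ) : Gf a - Gf b = ∫ t in a..b, Real.exp (-t^2) := by
  have key : ∀ u v : ℝ, u ≤ v → Gf u - Gf v = ∫ t in u..v, Real.exp (-t^2) := by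
    intro u v huv
    rw [intervalIntegral.integral_of_le huv, Gf, Gf]
    have : Set.Ioc u v ∪ Set.Ioi v = Set.Ioi u := Set.Ioc_union_Ioi_eq_Ioi huv
    rw [← this, setIntegral_union (Set.Ioc_disjoint_Ioi le_rfl) measurableSet_Ioi
      intg.integrableOn intg.integrableOn]
    ring
  rcases le_total a b with h | h
  · exact key a b h
  · rw [intervalIntegral.integral_symm]
    have := key b a h
    linarith [this]

lemma Gf_hasDeriv (x : ℝ) : HasDerivAt Gf (-(Real.exp (-x^2))) x := by
  have h1 : HasDerivAt (fun y => ∫ t in (x-1)..y, Real.exp (-t^2)) (Real.exp (-x^2)) x :=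
    intervalIntegral.integral_hasDerivAt_right intg.intervalIntegrable
      (cont_integrand.stronglyMeasurableAtFilter _ _) cont_integrand.continuousAt
  have heq : Gf = fun y => Gf (x-1) - ∫ t in (x-1)..y, Real.exp (-t^2) := by
    funext y
    have := Gf_split (x-1) y
    linarith
  rw [heq]
  simpa using (hasDerivAt_const x (Gf (x-1))).fun_sub h1

lemma V0_pos (x : ℝ) : 0 < V0 x := by
  have := Gf_pos x
  rw [Gf] at this
  have h2 : 0 < Real.exp (x^2) := Real.exp_pos _
  rw [V0]; positivity

lemma V0_hasDeriv (x : ℝ) : HasDerivAt V0 (2*x*V0 x - 2) x := by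
  have hx2 : HasDerivAt (fun y : ℝ => y^2) (2*x) x := by
    simpa using hasDerivAt_pow 2 x
  have hexp : HasDerivAt (fun y : ℝ => Real.exp (y^2)) (Real.exp (x^2) * (2*x)) x := hx2.exp
  have h := ((hexp.const_mul 2).fun_mul (Gf_hasDeriv x))
  have heq : V0 = fun y => (2 * Real.exp (y^2)) * Gf y := by
    funext y; simp only [V0, Gf]; try ring
  rw [heq]
  refine h.congr_deriv ?_
  have key : Real.exp (x^2) * Real.exp (-x^2) = 1 := by
    rw [← Real.exp_add]; simp
  simp only
  nlinarith [key]

lemma nu_hasDeriv (x : ℝ) : HasDerivAt nu (2 * nu x * (nu x - x)) x := by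
  have hv := V0_pos x
  have h := (hasDerivAt_const x (1:ℝ)).fun_div (V0_hasDeriv x) hv.ne'
  have heq : nu = fun y => 1 / V0 y := by funext y; simp only [nu]
  rw [heq]
  refine h.congr_deriv ?_
  simp only [nu]
  field_simp
  ring

noncomputable def Nf (x : ℝ) : ℝ := 2 * nu x * (nu x - x)

lemma deriv_nu : deriv nu = Nf := by
  funext x; exact (nu_hasDeriv x).deriv

lemma Nf_hasDeriv (x : ℝ) :
    HasDerivAt Nf (2 * nu x * (4*(nu x)^2 - 6*x*(nu x) + 2*x^2 - 1)) x := by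
  have h := ((nu_hasDeriv x).const_mul 2).fun_mul ((nu_hasDeriv x).fun_sub (hasDerivAt_id x))
  have heq : Nf = fun y => (2 * nu y) * (nu y - y) := by funext y; simp only [Nf]
  rw [heq]
  refine h.congr_deriv ?_
  simp only [id_eq]
  ring

noncomputable def phi (x : ℝ) : ℝ := 2 * Real.exp (-x^2) / (3*x + Real.sqrt (x^2+4))

noncomputable def ff (x : ℝ) : ℝ := phi x - Gf x

lemma s_pos (x : ℝ) : 0 < Real.sqrt (x^2+4) := Real.sqrt_pos.2 (by positivity)

lemma s_sq (x : ℝ) : (Real.sqrt (x^2+4))^2 = x^2+4 := Real.sq_sqrt (by positivity)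

lemma u_pos {x : ℝ} (hx : 0 ≤ x) : 0 < 3*x + Real.sqrt (x^2+4) := by
  have := s_pos x; linarith

lemma sqrt_hasDeriv (x : ℝ) :
    HasDerivAt (fun y => Real.sqrt (y^2+4)) (x / Real.sqrt (x^2+4)) x := by
  have hin : HasDerivAt (fun y : ℝ => y^2+4) (2*x) x := by
    simpa using (hasDerivAt_pow 2 x).add_const 4
  have h := hin.sqrt (by positivity)
  convert h using 1
  rw [mul_div_mul_left _ _ (two_ne_zero)]

lemma num_hasDeriv (x : ℝ) :
    HasDerivAt (fun y => 2 * Real.exp (-y^2)) (-4*x*Real.exp (-x^2)) x := by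
  have hin : HasDerivAt (fun y : ℝ => -y^2) (-(2*x)) x := by
    simpa using (hasDerivAt_pow 2 x).fun_neg
  have := (hin.exp).const_mul 2
  refine this.congr_deriv ?_
  ring

lemma phi_hasDeriv {x : ℝ} (hx : 0 ≤ x) :
    HasDerivAt phi
      (((-4*x*Real.exp (-x^2)) * (3*x + Real.sqrt (x^2+4))
        - 2 * Real.exp (-x^2) * (3 + x / Real.sqrt (x^2+4)))
        / (3*x + Real.sqrt (x^2+4))^2) x := by
  have hden : HasDerivAt (fun y => 3*y + Real.sqrt (y^2+4))
      (3 + x / Real.sqrt (x^2+4)) x := by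
    simpa using ((hasDerivAt_id x).const_mul 3).fun_add (sqrt_hasDeriv x)
  have h := (num_hasDeriv x).div hden (u_pos hx).ne'
  have heq : phi = fun y => (2 * Real.exp (-y^2)) / (3*y + Real.sqrt (y^2+4)) := by
    funext y; simp only [phi]
  rw [heq]
  exact h

lemma key_ineq {x : ℝ} (hx : 0 ≤ x) :
    x*(x^2+3) < Real.sqrt (x^2+4) * (x^2+1) := by
  set s := Real.sqrt (x^2+4) with hs
  have hsp := s_pos x
  have hsq : s^2 = x^2+4 := s_sq x
  have h4 : (s*(x^2+1) - x*(x^2+3)) * (s*(x^2+1) + x*(x^2+3)) = 4 := by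
    linear_combination ((x^2+1)^2) * hsq
  nlinarith [h4, mul_pos hsp (show (0:ℝ) < x^2+1 by positivity),
    mul_nonneg hx (show (0:ℝ) ≤ x^2+3 by positivity)]

lemma ff_deriv_neg {x : ℝ} (hx : 0 ≤ x) :
    (((-4*x*Real.exp (-x^2)) * (3*x + Real.sqrt (x^2+4))
        - 2 * Real.exp (-x^2) * (3 + x / Real.sqrt (x^2+4)))
        / (3*x + Real.sqrt (x^2+4))^2) + Real.exp (-x^2) < 0 := by
  set s := Real.sqrt (x^2+4) with hs
  set e := Real.exp (-x^2) with he
  have hsp := s_pos x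
  have hsq : s^2 = x^2+4 := s_sq x
  have hup := u_pos hx
  have hep : 0 < e := Real.exp_pos _
  have hkey := key_ineq hx
  set E := ((-4*x*e) * (3*x + s) - 2*e*(3 + x/s)) / (3*x+s)^2 + e with hE
  have hEs : E * (s * (3*x+s)^2) = 2*e*(x^3+3*x - s*(x^2+1)) := by
    rw [hE]
    have hs0 : s ≠ 0 := hsp.ne'; have hu0 : 3*x+s ≠ 0 := hup.ne'
    rw [div_add' _ _ _ (pow_ne_zero 2 hu0), div_mul_eq_mul_div, div_eq_iff (pow_ne_zero 2 hu0)]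
    field_simp
    linear_combination ((3*x+s)^2*(s + 2*x)) * hsq
  have hrhs : 2*e*(x^3+3*x - s*(x^2+1)) < 0 := by nlinarith [hkey, hep]
  by_contra hcon
  push_neg at hcon
  nlinarith [mul_nonneg hcon (show (0:ℝ) ≤ s * (3*x+s)^2 by positivity), hEs, hrhs]

lemma ff_hasDeriv {x : ℝ} (hx : 0 ≤ x) :
    HasDerivAt ff
      ((((-4*x*Real.exp (-x^2)) * (3*x + Real.sqrt (x^2+4))
        - 2 * Real.exp (-x^2) * (3 + x / Real.sqrt (x^2+4)))
        / (3*x + Real.sqrt (x^2+4))^2) + Real.exp (-x^2)) x := by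
  have h := (phi_hasDeriv hx).fun_sub (Gf_hasDeriv x)
  have heq : ff = fun y => phi y - Gf y := by funext y; simp only [ff]
  rw [heq]
  refine h.congr_deriv ?_
  ring

lemma ff_contOn : ContinuousOn ff (Set.Ici (0:ℝ)) :=
  fun x hx => ((ff_hasDeriv hx).continuousAt).continuousWithinAt

lemma ff_strictAnti : StrictAntiOn ff (Set.Ici (0:ℝ)) := by
  apply strictAntiOn_of_deriv_neg (convex_Ici 0) ff_contOn
  intro x hx
  rw [interior_Ici] at hx
  rw [(ff_hasDeriv (le_of_lt hx)).deriv]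
  exact ff_deriv_neg (le_of_lt hx)

lemma phi_tendsto : Tendsto phi atTop (nhds 0) := by
  have hnum : Tendsto (fun x : ℝ => 2 * Real.exp (-x^2)) atTop (nhds 0) := by
    have h1 : Tendsto (fun x : ℝ => -x^2) atTop atBot :=
      tendsto_neg_atTop_atBot.comp (tendsto_pow_atTop two_ne_zero)
    have := (Real.tendsto_exp_atBot.comp h1).const_mul 2
    simpa using this
  have hden : Tendsto (fun x : ℝ => 3*x + Real.sqrt (x^2+4)) atTop atTop := by
    apply Tendsto.atTop_add_nonneg
    · exact (tendsto_id (α := ℝ)).const_mul_atTop (by norm_num)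
    · exact fun x => Real.sqrt_nonneg _
  have := hnum.div_atTop hden
  exact this

lemma Gf_tendsto : Tendsto Gf atTop (nhds 0) := by
  apply tendsto_of_tendsto_of_tendsto_of_le_of_le' (g := fun _ : ℝ => (0:ℝ))
    (h := fun x : ℝ => Real.exp (-x)) tendsto_const_nhds
    Real.tendsto_exp_neg_atTop_nhds_zero
  · exact Filter.Eventually.of_forall fun x => (Gf_pos x).le
  · filter_upwards [eventually_ge_atTop (1:ℝ)] with x hx
    have hle : Gf x ≤ ∫ t in Set.Ioi x, Real.exp (-t) := by
      rw [Gf]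
      apply setIntegral_mono_on intg.integrableOn
      · have := exp_neg_integrableOn_Ioi x (one_pos (α := ℝ))
        simpa using this
      · exact measurableSet_Ioi
      · intro t ht
        have ht' : (1:ℝ) ≤ t := le_trans hx (le_of_lt ht)
        apply Real.exp_le_exp.2
        nlinarith
    calc Gf x ≤ ∫ t in Set.Ioi x, Real.exp (-t) := hle
    _ = Real.exp (-x) := integral_exp_neg_Ioi x

lemma ff_tendsto : Tendsto ff atTop (nhds 0) := by
  have := phi_tendsto.sub Gf_tendsto
  simp only [sub_zero] at this; exact this

lemma ff_pos {x : ℝ} (hx : 0 ≤ x) : 0 < ff x := by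
  have h1 : ff (x+1) < ff x :=
    ff_strictAnti hx (Set.mem_Ici.2 (by linarith)) (by linarith)
  have h2 : 0 ≤ ff (x+1) := by
    apply le_of_tendsto ff_tendsto
    filter_upwards [eventually_ge_atTop (x+2)] with y hy
    exact le_of_lt (ff_strictAnti (Set.mem_Ici.2 (by linarith)) (Set.mem_Ici.2 (by linarith)) (by linarith))
  linarith

lemma nu_bound {x : ℝ} (hx : 0 ≤ x) : (3*x + Real.sqrt (x^2+4)) / 4 < nu x := by
  have hff := ff_pos hx
  have hup := u_pos hx
  set s := Real.sqrt (x^2+4) with hs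
  have hG : Gf x * (3*x+s) < 2 * Real.exp (-x^2) := by
    have : 0 < phi x - Gf x := hff
    rw [phi] at this
    rw [← lt_div_iff₀ hup]
    linarith
  have key : Real.exp (x^2) * Real.exp (-x^2) = 1 := by
    rw [← Real.exp_add]; simp
  have hV : V0 x * (3*x+s) < 4 := by
    have hVeq : V0 x = 2 * Real.exp (x^2) * Gf x := by simp only [V0, Gf]
    rw [hVeq]
    have hexp : 0 < Real.exp (x^2) := Real.exp_pos _
    nlinarith [hG, key]
  rw [nu, div_lt_div_iff₀ (by norm_num) (V0_pos x)]
  nlinarith [hV]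

lemma second_deriv_pos {x : ℝ} (hx : 0 < x) : 0 < deriv (deriv nu) x := by
  rw [deriv_nu, (Nf_hasDeriv x).deriv]
  have hnu : 0 < nu x := by
    have := V0_pos x
    simp only [nu]
    positivity
  set s := Real.sqrt (x^2+4) with hs
  have hsp := s_pos x
  have hsq : s^2 = x^2+4 := s_sq x
  have hb := nu_bound hx.le
  have hA : 0 < nu x - (3*x+s)/4 := by rw [← hs] at hb; linarith
  have hB : 0 < nu x - (3*x-s)/4 := by rw [← hs] at hb; linarith
  have h2 : 0 < 4*(nu x)^2 - 6*x*(nu x) + 2*x^2 - 1 := by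
    nlinarith [mul_pos hA hB, hsq]
  nlinarith [mul_pos hnu h2]

theorem nu_strictConvex :
    StrictConvexOn ℝ (Set.Ici (0:ℝ)) nu ∧ ∀ x : ℝ, 0 < x → 0 < deriv (deriv nu) x := by
  constructor
  · apply strictConvexOn_of_deriv2_pos (convex_Ici 0)
    · exact fun x _ => ((nu_hasDeriv x).continuousAt).continuousWithinAt
    · intro x hx
      rw [interior_Ici] at hx
      show 0 < deriv (deriv nu) x
      exact second_deriv_pos hx
  · exact fun x hx => second_deriv_pos hx
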